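/- arXiv:1111.1067 — 3 statements merged into one kernel-verified Lean document; each statement's English description precedes it below -/
import Mathlib

section
/- Let φ, ψ : ℝ → ℂ and κ : ℝ → (0,∞) satisfy |φ(u)| ≥ 3κ(u) for all u. Define φ̃(u) := v_{κ(u)}(ψ(u)) where v_κ(z) = z if |z| ≥ κ and v_κ(z) = κz/|z| otherwise (with ψ(u) ≠ 0). Then for every u, |φ̃(u) − φ(u)| ≤ 2|ψ(u) − φ(u)|. -/
/-- The trimming function `v_κ`. -/
noncomputable def trim (κ : ℝ) (z : ℂ) : ℂ :=
  if κ ≤ ‖z‖ then z else (κ : ℂ) * z / (‖z‖ : ℂ)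

theorem stmt2 (φ ψ : ℝ → ℂ) (κ : ℝ → ℝ) (hκ : ∀ u, 0 < κ u)
    (hψ : ∀ u, ψ u ≠ 0) (hφ : ∀ u, 3 * κ u ≤ ‖φ u‖) :
    ∀ u, ‖trim (κ u) (ψ u) - φ u‖ ≤ 2 * ‖ψ u - φ u‖ := by
  intro u
  unfold trim
  split_ifs with h
  · have := norm_nonneg (ψ u - φ u); linarith
  · push_neg at h
    set a := ‖ψ u‖ with ha'
    have ha : 0 < a := norm_pos_iff.mpr (hψ u)
    have key : ‖(κ u : ℂ) * ψ u / (a : ℂ) - ψ u‖ = κ u - a := by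
      have e : (κ u : ℂ) * ψ u / (a : ℂ) - ψ u = ψ u * (((κ u - a) / a : ℝ) : ℂ) := by
        have haC : (a : ℂ) ≠ 0 := by exact_mod_cast ha.ne'
        push_cast
        field_simp
      rw [e, norm_mul, Complex.norm_real, Real.norm_eq_abs, abs_of_nonneg (div_nonneg (by linarith) ha.le)]
      field_simp
      exact ha'.symm
    -- lower bound on |ψ - φ|
    have tri1 : ‖φ u - ψ u‖ + ‖ψ u‖ ≥ ‖φ u‖ := by
      have := norm_sub_le_norm_sub_add_norm_sub (φ u) (ψ u) 0
      simpa using this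
    have hc : ‖φ u - ψ u‖ = ‖ψ u - φ u‖ :=
      norm_sub_rev _ _
    have lb : 2 * κ u ≤ ‖ψ u - φ u‖ := by
      have := hφ u
      rw [hc] at tri1
      linarith
    have tri2 : ‖(κ u : ℂ) * ψ u / (a : ℂ) - φ u‖ ≤
        ‖(κ u : ℂ) * ψ u / (a : ℂ) - ψ u‖ + ‖ψ u - φ u‖ := by
      have := norm_sub_le_norm_sub_add_norm_sub ((κ u : ℂ) * ψ u / (a : ℂ)) (ψ u) (φ u)
      simpa using this
    rw [key] at tri2
    linarith
end

section
/- Let T > 0, α ≥ 0 and k : ℝ → ℝ≥0 with bounded variation, k(0+) + k(0−) = α, q_k := sup_{x∈(0,1]} (k(x)+k(−x)−α)/x < ∞ and ‖e^x k(x)‖_{L^1} < ∞, and suppose the martingale condition holds. Then there is a constant C_φ > 0 depending only on T and max{q_k, ‖e^x k‖_{L^1}, ‖k‖_{TV}} such that |φ_T(u−i)| ≥ C_φ |u|^{−Tα} for all |u| ≥ 1, where φ_T(u−i) = exp(T ∫ (cos(ux)−1) e^x k(x)/|x| dx). -/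
set_option maxHeartbeats 1000000
open MeasureTheory Filter intervalIntegral Real Set


lemma osc (U : ℝ) (hU : 1 ≤ U) : -3 ≤ ∫ x in (1/U)..1, x⁻¹ * Real.cos (U*x) := by
  have hU0 : 0 < U := lt_of_lt_of_le one_pos hU
  have hab : 1/U ≤ 1 := by rw [div_le_one hU0]; exact hU
  have ha0 : 0 < 1/U := by positivity
  have huIcc : Set.uIcc (1/U) 1 = Set.Icc (1/U) 1 := Set.uIcc_of_le hab
  have hpos : ∀ x ∈ Set.uIcc (1/U) 1, 0 < x := by
    intro x hx; rw [huIcc] at hx; exact lt_of_lt_of_le ha0 hx.1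
  have h0ni : (0:ℝ) ∉ Set.uIcc (1/U) 1 := by
    rw [huIcc]; exact fun h => absurd h.1 (not_le.mpr ha0)
  have key := intervalIntegral.integral_mul_deriv_eq_deriv_mul_of_hasDerivAt
      (u := fun x : ℝ => x⁻¹) (v := fun x => Real.sin (U*x) / U)
      (u' := fun x => -(x^2)⁻¹) (v' := fun x => Real.cos (U*x))
      (a := 1/U) (b := 1)
      (by
        apply ContinuousOn.inv₀ continuousOn_id
        intro x hx; exact (hpos x hx).ne')
      (by fun_prop)
      (fun x hx => by
        have h1 : min (1/U) 1 < x := hx.1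
        rw [min_eq_left hab] at h1
        exact hasDerivAt_inv (lt_trans ha0 h1).ne')
      (fun x hx => by
        have : HasDerivAt (fun y : ℝ => Real.sin (U*y)) (Real.cos (U*x) * U) x := by
          simpa [mul_comm, Function.comp_def] using ((Real.hasDerivAt_sin (U*x)).comp x ((hasDerivAt_id x).const_mul U))
        simpa [mul_div_cancel_right₀ _ hU0.ne'] using this.div_const U)
      (by
        apply ContinuousOn.intervalIntegrable
        apply ContinuousOn.neg
        apply ContinuousOn.inv₀ (by fun_prop)
        intro x hx; exact (pow_ne_zero 2 (hpos x hx).ne'))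
      (by apply ContinuousOn.intervalIntegrable; fun_prop)
  rw [key]
  have h1 : (1:ℝ)⁻¹ * (Real.sin (U*1) / U) ≥ -1 := by
    have hs := Real.neg_one_le_sin (U*1)
    rw [ge_iff_le, inv_one, one_mul, le_div_iff₀ hU0]
    nlinarith
  have h2 : (1/U)⁻¹ * (Real.sin (U*(1/U)) / U) ≤ 1 := by
    have hUU : U * (1/U) = 1 := by field_simp
    rw [hUU, one_div, inv_inv]
    have : U * (Real.sin 1 / U) = Real.sin 1 := by field_simp
    rw [this]
    exact Real.sin_le_one 1
  have h3 : ∫ x in (1/U)..1, -(x^2)⁻¹ * (Real.sin (U*x) / U) ≤ 1 := by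
    have hmono : ∫ x in (1/U)..1, -(x^2)⁻¹ * (Real.sin (U*x) / U) ≤ ∫ x in (1/U)..1, (x^2)⁻¹ / U := by
      apply intervalIntegral.integral_mono_on hab
      · apply ContinuousOn.intervalIntegrable
        apply ContinuousOn.mul
        · apply ContinuousOn.neg
          apply ContinuousOn.inv₀ (by fun_prop)
          intro x hx; exact (pow_ne_zero 2 (hpos x hx).ne')
        · fun_prop
      · apply ContinuousOn.intervalIntegrable
        apply ContinuousOn.div_const
        apply ContinuousOn.inv₀ (by fun_prop)
        intro x hx; exact (pow_ne_zero 2 (hpos x hx).ne')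
      · intro x hx
        have hx0 : 0 < x := lt_of_lt_of_le ha0 hx.1
        have hs : -1 ≤ Real.sin (U*x) := Real.neg_one_le_sin _
        have hxx : (0:ℝ) < (x^2)⁻¹ := by positivity
        calc -(x^2)⁻¹ * (Real.sin (U*x)/U) = (-((x^2)⁻¹ * Real.sin (U*x)))/U := by ring
          _ ≤ (x^2)⁻¹ / U := by gcongr; nlinarith
    have hz : ∫ x in (1/U)..1, (x:ℝ)^(-2:ℤ) = U - 1 := by
      rw [integral_zpow (Or.inr ⟨by decide, h0ni⟩)]
      norm_num
      ring
    have hcg : ∫ x in (1/U)..1, (x^2)⁻¹ / U = (∫ x in (1/U)..1, (x:ℝ)^(-2:ℤ)) / U := by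
      rw [← intervalIntegral.integral_div]
      apply intervalIntegral.integral_congr
      intro x hx
      show (x^2)⁻¹ / U = x^(-2:ℤ) / U
      simp only [zpow_neg, zpow_two]
      ring
    rw [hcg, hz] at hmono
    apply hmono.trans
    rw [div_le_one hU0]; linarith
  linarith


lemma k_le {R : ℝ} (hR : 0 < R) {k : ℝ → ℝ}
    (hvar : eVariationOn k Set.univ ≤ ENNReal.ofReal R)
    (hint : Integrable fun x : ℝ => Real.exp x * k x) (hk0 : ∀ x, 0 ≤ k x) :
    ∀ x, k x ≤ R := by
  by_contra h
  push_neg at h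
  obtain ⟨x₀, hx₀⟩ := h
  set c := k x₀ - R with hc
  have hc0 : 0 < c := by rw [hc]; linarith
  have hlow : ∀ y, c ≤ k y := by
    intro y
    have h1 : edist (k x₀) (k y) ≤ ENNReal.ofReal R :=
      le_trans (eVariationOn.edist_le k (Set.mem_univ x₀) (Set.mem_univ y)) hvar
    rw [edist_dist] at h1
    have h2 : dist (k x₀) (k y) ≤ R := (ENNReal.ofReal_le_ofReal_iff hR.le).mp h1
    rw [Real.dist_eq] at h2
    have := (abs_le.mp h2).2
    rw [hc]; linarith
  have hce : Integrable (fun x : ℝ => c * Real.exp x) := by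
    apply Integrable.mono' hint ((continuous_const.mul Real.continuous_exp).aestronglyMeasurable)
    filter_upwards with x
    show ‖c * Real.exp x‖ ≤ Real.exp x * k x
    rw [Real.norm_eq_abs, abs_of_nonneg (mul_nonneg hc0.le (Real.exp_pos x).le)]
    nlinarith [Real.exp_pos x, hk0 x, hlow x]
  have hee : Integrable Real.exp := by
    have := hce.const_mul c⁻¹
    simpa [← mul_assoc, inv_mul_cancel₀ hc0.ne'] using this
  have h1 : IntegrableOn (fun _ : ℝ => (1:ℝ)) (Set.Ioi 0) := by
    apply Integrable.mono' hee.integrableOn aestronglyMeasurable_const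
    rw [ae_restrict_iff' measurableSet_Ioi]
    filter_upwards with x hx
    rw [norm_one]
    exact Real.one_le_exp hx.le
  rw [integrableOn_const_iff] at h1
  simp [Real.volume_Ioi] at h1

lemma exp_sub_one_le' {x : ℝ} (h0 : 0 ≤ x) (h1 : x ≤ 1) :
    Real.exp x - 1 ≤ (Real.exp 1 - 1) * x := by
  have h := convexOn_exp.2 (Set.mem_univ (1:ℝ)) (Set.mem_univ (0:ℝ)) (show (0:ℝ) ≤ x from h0) (show (0:ℝ) ≤ 1 - x by linarith) (show x + (1 - x) = 1 by ring)
  simp only [smul_eq_mul, mul_one, mul_zero, add_zero, Real.exp_zero] at h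
  linarith

lemma core (U : ℝ) (hU : 1 ≤ U) :
    ∫ x in (1/U)..1, (1 - Real.cos (U*x)) / x ≤ Real.log U + 3 := by
  have hU0 : 0 < U := lt_of_lt_of_le one_pos hU
  have hab : 1/U ≤ 1 := by rw [div_le_one hU0]; exact hU
  have ha0 : 0 < 1/U := by positivity
  have huIcc : Set.uIcc (1/U) 1 = Set.Icc (1/U) 1 := Set.uIcc_of_le hab
  have hpos : ∀ x ∈ Set.uIcc (1/U) 1, 0 < x := by
    intro x hx; rw [huIcc] at hx; exact lt_of_lt_of_le ha0 hx.1
  have h0ni : (0:ℝ) ∉ Set.uIcc (1/U) 1 := by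
    rw [huIcc]; exact fun h => absurd h.1 (not_le.mpr ha0)
  have hi1 : IntervalIntegrable (fun x : ℝ => 1/x) volume (1/U) 1 := by
    apply ContinuousOn.intervalIntegrable
    exact ContinuousOn.div continuousOn_const continuousOn_id fun x hx => (hpos x hx).ne'
  have hi2 : IntervalIntegrable (fun x : ℝ => x⁻¹ * Real.cos (U*x)) volume (1/U) 1 := by
    apply ContinuousOn.intervalIntegrable
    exact ContinuousOn.mul (ContinuousOn.inv₀ continuousOn_id fun x hx => (hpos x hx).ne')
      (by fun_prop)
  have hcf : ∫ x in (1/U)..1, (1 - Real.cos (U*x)) / x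
      = (∫ x in (1/U)..1, 1/x) - ∫ x in (1/U)..1, x⁻¹ * Real.cos (U*x) := by
    rw [← intervalIntegral.integral_sub hi1 hi2]
    apply intervalIntegral.integral_congr
    intro x hx
    have hne := (hpos x hx).ne'
    field_simp
  rw [hcf, integral_one_div h0ni]
  have hlog : Real.log (1/(1/U)) = Real.log U := by rw [one_div_one_div]
  rw [hlog]
  linarith [osc U hU]

/-- Lemma 1(i): polynomial lower bound for `|φ_T(u-i)|`, with the constant depending
only on `T` and a common bound `R` on `q_k`, `‖e^x k‖_{L¹}` and `‖k‖_{TV}`. -/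
theorem stmt10 (T R : ℝ) (hT : 0 < T) (hR : 0 < R) :
    ∃ C > 0, ∀ (α : ℝ) (k : ℝ → ℝ) (γ a b : ℝ),
      0 ≤ α →
      (∀ x, 0 ≤ k x) →
      eVariationOn k Set.univ ≤ ENNReal.ofReal R →
      Tendsto k (nhdsWithin 0 (Set.Ioi 0)) (nhds a) →
      Tendsto k (nhdsWithin 0 (Set.Iio 0)) (nhds b) →
      a + b = α →
      (∀ x ∈ Set.Ioc (0 : ℝ) 1, (k x + k (-x) - α) / x ≤ R) →
      Integrable (fun x : ℝ => Real.exp x * k x) →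
      (∫ x : ℝ, |Real.exp x * k x|) ≤ R →
      Integrable (fun x : ℝ => (Real.exp x - 1) * k x / |x|) →
      γ + (∫ x : ℝ, (Real.exp x - 1) * k x / |x|) = 0 →
      (∀ u : ℝ, Integrable (fun x : ℝ => (Real.cos (u * x) - 1) * (Real.exp x * k x / |x|))) →
      ∀ u : ℝ, 1 ≤ |u| →
        C * |u| ^ (-(T * α)) ≤
          Real.exp (T * ∫ x : ℝ, (Real.cos (u * x) - 1) * (Real.exp x * k x / |x|)) := by
  refine ⟨Real.exp (-(T * (20 * R))), Real.exp_pos _, ?_⟩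
  intro α k γ a b hα hk0 hvar hta htb hab hq hint hL1 _ _ hcosint u hu
  set U : ℝ := |u| with hUdef
  have hU : 1 ≤ U := hu
  have hU0 : 0 < U := lt_of_lt_of_le one_pos hU
  have h1U : 1/U ≤ 1 := by rw [div_le_one hU0]; exact hU
  have h1U0 : 0 < 1/U := by positivity
  have hkR : ∀ x, k x ≤ R := k_le hR hvar hint hk0
  have haR : a ≤ R := le_of_tendsto hta (Eventually.of_forall fun x => hkR x)
  have ha0 : 0 ≤ a := ge_of_tendsto hta (Eventually.of_forall fun x => hk0 x)
  have hbR : b ≤ R := le_of_tendsto htb (Eventually.of_forall fun x => hkR x)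
  have hα2R : α ≤ 2 * R := by rw [← hab]; linarith
  have hE : Real.exp 1 < 3 := lt_trans Real.exp_one_lt_d9 (by norm_num)
  have hE0 : 0 < Real.exp 1 := Real.exp_pos 1
  -- even in u
  have hceven : ∀ x, Real.cos (u*x) = Real.cos (U*x) := by
    intro x
    rcases abs_choice u with h | h
    · rw [hUdef, h]
    · rw [hUdef, h, neg_mul, Real.cos_neg]
  set g : ℝ → ℝ := fun x => (1 - Real.cos (U*x)) * (Real.exp x * k x / |x|) with hgdef
  have hgint : Integrable g := by
    have h2 := (hcosint U).neg
    exact h2.congr (Eventually.of_forall fun x => by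
      show -((Real.cos (U*x) - 1) * (Real.exp x * k x / |x|)) = g x
      rw [hgdef]; ring)
  have hA0 : ∀ x : ℝ, 0 ≤ Real.exp x * k x / |x| := fun x =>
    div_nonneg (mul_nonneg (Real.exp_pos x).le (hk0 x)) (abs_nonneg x)
  have hg0 : ∀ x, 0 ≤ g x := fun x =>
    mul_nonneg (by nlinarith [Real.cos_le_one (U*x)]) (hA0 x)
  -- outer bound
  have houter : ∀ s : Set ℝ, MeasurableSet s → (∀ x ∈ s, 1 ≤ |x|) → ∫ x in s, g x ≤ 2*R := by
    intro s hs hsx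
    have hek0 : ∀ x : ℝ, 0 ≤ Real.exp x * k x := fun x =>
      mul_nonneg (Real.exp_pos x).le (hk0 x)
    have h1 : ∫ x in s, g x ≤ ∫ x in s, 2 * (Real.exp x * k x) := by
      apply setIntegral_mono_on hgint.integrableOn (hint.const_mul 2).integrableOn hs
      intro x hx
      have h2 : 1 ≤ |x| := hsx x hx
      have hAle : Real.exp x * k x / |x| ≤ Real.exp x * k x := div_le_self (hek0 x) h2
      have hc2 : 1 - Real.cos (U*x) ≤ 2 := by nlinarith [Real.neg_one_le_cos (U*x)]
      have hc0 : 0 ≤ 1 - Real.cos (U*x) := by nlinarith [Real.cos_le_one (U*x)]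
      calc (1 - Real.cos (U*x)) * (Real.exp x * k x / |x|)
          ≤ 2 * (Real.exp x * k x / |x|) := mul_le_mul_of_nonneg_right hc2 (hA0 x)
        _ ≤ 2 * (Real.exp x * k x) := by linarith [hAle]
    have h2 : ∫ x in s, 2 * (Real.exp x * k x) ≤ ∫ x : ℝ, 2 * (Real.exp x * k x) :=
      setIntegral_le_integral (hint.const_mul 2) (ae_of_all _ fun x => by
        have := mul_nonneg (Real.exp_pos x).le (hk0 x)
        simp only [Pi.zero_apply]; linarith)
    have h3 : ∫ x : ℝ, 2 * (Real.exp x * k x) = 2 * ∫ x : ℝ, Real.exp x * k x :=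
      integral_const_mul 2 _
    have h4 : ∫ x : ℝ, Real.exp x * k x ≤ R :=
      le_trans (integral_mono hint hint.abs fun x => le_abs_self _) hL1
    calc ∫ x in s, g x ≤ ∫ x in s, 2 * (Real.exp x * k x) := h1
      _ ≤ 2 * ∫ x : ℝ, Real.exp x * k x := by rw [← h3]; exact h2
      _ ≤ 2 * R := by linarith
  -- splitting
  have hsplit : ∫ x : ℝ, g x = (∫ x in Iic (-1:ℝ), g x) + ((∫ x in Ioc (-1:ℝ) 0, g x)
      + ∫ x in Ioc (0:ℝ) 1, g x) + ∫ x in Ioi (1:ℝ), g x := by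
    have e1 : ∫ x : ℝ, g x = (∫ x in Iic (1:ℝ), g x) + ∫ x in Ioi (1:ℝ), g x := by
      rw [← integral_add_compl measurableSet_Iic hgint, Set.compl_Iic]
    have e2 : ∫ x in Iic (1:ℝ), g x = (∫ x in Iic (-1:ℝ), g x) + ∫ x in Ioc (-1:ℝ) 1, g x := by
      rw [← MeasureTheory.setIntegral_union (Set.Iic_disjoint_Ioc le_rfl) measurableSet_Ioc
        hgint.integrableOn hgint.integrableOn,
        Set.Iic_union_Ioc_eq_Iic (by norm_num : (-1:ℝ) ≤ 1)]
    have e3 : ∫ x in Ioc (-1:ℝ) 1, g x = (∫ x in Ioc (-1:ℝ) 0, g x) + ∫ x in Ioc (0:ℝ) 1, g x := by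
      rw [← MeasureTheory.setIntegral_union (Set.Ioc_disjoint_Ioc_of_le le_rfl) measurableSet_Ioc
        hgint.integrableOn hgint.integrableOn,
        Set.Ioc_union_Ioc_eq_Ioc (by norm_num : (-1:ℝ) ≤ 0) (by norm_num : (0:ℝ) ≤ 1)]
    rw [e1, e2, e3]
  -- inner part
  have hgII : ∀ c d : ℝ, IntervalIntegrable g volume c d := fun c d =>
    hgint.intervalIntegrable
  have hgnegII : IntervalIntegrable (fun x => g (-x)) volume 0 1 := by
    have := (hgII 0 (-1))
    rw [IntervalIntegrable.iff_comp_neg] at this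
    simpa using this
  have hinner : (∫ x in Ioc (-1:ℝ) 0, g x) + ∫ x in Ioc (0:ℝ) 1, g x
      = ∫ x in (0:ℝ)..1, (g x + g (-x)) := by
    have e1 : ∫ x in (0:ℝ)..1, g (-x) = ∫ x in Ioc (-1:ℝ) 0, g x := by
      rw [intervalIntegral.integral_comp_neg, show -(0:ℝ) = 0 by norm_num,
        intervalIntegral.integral_of_le (by norm_num : (-1:ℝ) ≤ 0)]
    rw [intervalIntegral.integral_add (hgII 0 1) hgnegII, e1,
      intervalIntegral.integral_of_le (by norm_num : (0:ℝ) ≤ 1)]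
    ring
  have hhII01 : IntervalIntegrable (fun x => g x + g (-x)) volume 0 1 :=
    (hgII 0 1).add hgnegII
  have hhIIa : IntervalIntegrable (fun x => g x + g (-x)) volume 0 (1/U) :=
    hhII01.mono_set (by
      rw [Set.uIcc_of_le h1U0.le, Set.uIcc_of_le (by norm_num : (0:ℝ) ≤ 1)]
      exact Set.Icc_subset_Icc le_rfl h1U)
  have hhIIb : IntervalIntegrable (fun x => g x + g (-x)) volume (1/U) 1 :=
    hhII01.mono_set (by
      rw [Set.uIcc_of_le h1U, Set.uIcc_of_le (by norm_num : (0:ℝ) ≤ 1)]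
      exact Set.Icc_subset_Icc h1U0.le le_rfl)
  have hadj : ∫ x in (0:ℝ)..1, (g x + g (-x))
      = (∫ x in (0:ℝ)..(1/U), (g x + g (-x))) + ∫ x in (1/U)..1, (g x + g (-x)) :=
    (intervalIntegral.integral_add_adjacent_intervals hhIIa hhIIb).symm
  -- pointwise bound on (0,1]
  have hpt : ∀ x : ℝ, 0 < x → x ≤ 1 →
      g x + g (-x) ≤ (1 - Real.cos (U*x)) * ((α + (Real.exp 1 * R) * x)/x) := by
    intro x hx0 hx1
    have hxne : x ≠ 0 := hx0.ne'
    have hgx : g x + g (-x)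
        = (1 - Real.cos (U*x)) * ((Real.exp x * k x + Real.exp (-x) * k (-x))/x) := by
      rw [hgdef]
      simp only
      rw [mul_neg, Real.cos_neg, abs_neg, abs_of_pos hx0]
      ring
    rw [hgx]
    have hc0 : 0 ≤ 1 - Real.cos (U*x) := by nlinarith [Real.cos_le_one (U*x)]
    apply mul_le_mul_of_nonneg_left _ hc0
    have hnum : Real.exp x * k x + Real.exp (-x) * k (-x) ≤ α + (Real.exp 1 * R) * x := by
      have hsum : k x + k (-x) ≤ α + R * x := by
        have h := hq x ⟨hx0, hx1⟩
        rw [div_le_iff₀ hx0] at h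
        linarith
      have h1 : Real.exp x * k x ≤ k x + (Real.exp 1 - 1) * x * R := by
        have he := exp_sub_one_le' hx0.le hx1
        have he0 : 0 ≤ Real.exp x - 1 := by linarith [Real.one_le_exp hx0.le]
        have hee0 : 0 ≤ (Real.exp 1 - 1) * x := by nlinarith [Real.one_le_exp (by norm_num : (0:ℝ) ≤ 1)]
        nlinarith [mul_le_mul he (hkR x) (hk0 x) hee0]
      have h2 : Real.exp (-x) * k (-x) ≤ k (-x) := by
        have := Real.exp_le_one_iff.mpr (by linarith : -x ≤ 0)
        nlinarith [hk0 (-x)]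
      nlinarith
    exact (div_le_div_iff_of_pos_right hx0).mpr hnum
  -- Q1 bound
  have hEnn : 0 ≤ α + Real.exp 1 * R := by positivity
  have hQ1 : ∫ x in (0:ℝ)..(1/U), (g x + g (-x)) ≤ (α + Real.exp 1 * R)/4 := by
    have hmono : ∫ x in (0:ℝ)..(1/U), (g x + g (-x))
        ≤ ∫ x in (0:ℝ)..(1/U), (U^2*(α + Real.exp 1 * R)/2) * x := by
      apply intervalIntegral.integral_mono_on h1U0.le hhIIa
        (by apply ContinuousOn.intervalIntegrable; fun_prop)
      intro x hx
      rcases eq_or_lt_of_le hx.1 with h0 | h0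
      · rw [hgdef]; simp [← h0]
      · have hx1 : x ≤ 1 := le_trans hx.2 h1U
        have h1 := hpt x h0 hx1
        have hcc : 1 - Real.cos (U*x) ≤ (U*x)^2/2 := by
          nlinarith [Real.one_sub_sq_div_two_le_cos (x := U*x)]
        have hfrac : (α + (Real.exp 1*R)*x)/x ≤ (α + Real.exp 1 * R)/x :=
          (div_le_div_iff_of_pos_right h0).mpr (by nlinarith [mul_nonneg (mul_nonneg hE0.le hR.le) (sub_nonneg.mpr hx1)])
        calc g x + g (-x) ≤ (1 - Real.cos (U*x)) * ((α + (Real.exp 1*R)*x)/x) := h1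
          _ ≤ ((U*x)^2/2) * ((α + Real.exp 1*R)/x) := by
              apply mul_le_mul hcc hfrac (by positivity) (by positivity)
          _ = (U^2*(α + Real.exp 1*R)/2) * x := by
              field_simp
    have hval : ∫ x in (0:ℝ)..(1/U), (U^2*(α + Real.exp 1 * R)/2) * x
        = (α + Real.exp 1 * R)/4 := by
      rw [intervalIntegral.integral_const_mul, integral_id]
      field_simp
      ring
    linarith
  -- Q2 bound
  have hposI : ∀ x ∈ Set.uIcc (1/U) 1, 0 < x := by
    intro x hx
    rw [Set.uIcc_of_le h1U] at hx
    exact lt_of_lt_of_le h1U0 hx.1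
  have int1 : IntervalIntegrable (fun x : ℝ => (1 - Real.cos (U*x))/x) volume (1/U) 1 := by
    apply ContinuousOn.intervalIntegrable
    exact ContinuousOn.div (by fun_prop) continuousOn_id fun x hx => (hposI x hx).ne'
  have int2 : IntervalIntegrable (fun x : ℝ => 1 - Real.cos (U*x)) volume (1/U) 1 := by
    apply ContinuousOn.intervalIntegrable; fun_prop
  have intQ2 : IntervalIntegrable
      (fun x : ℝ => (1 - Real.cos (U*x)) * ((α + (Real.exp 1*R)*x)/x)) volume (1/U) 1 := by
    apply ContinuousOn.intervalIntegrable
    apply ContinuousOn.mul (by fun_prop)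
    exact ContinuousOn.div (by fun_prop) continuousOn_id fun x hx => (hposI x hx).ne'
  have hQ2 : ∫ x in (1/U)..1, (g x + g (-x))
      ≤ α * (Real.log U + 3) + 2 * (Real.exp 1 * R) := by
    have hmono : ∫ x in (1/U)..1, (g x + g (-x))
        ≤ ∫ x in (1/U)..1, (1 - Real.cos (U*x)) * ((α + (Real.exp 1*R)*x)/x) := by
      apply intervalIntegral.integral_mono_on h1U hhIIb intQ2
      intro x hx
      exact hpt x (lt_of_lt_of_le h1U0 hx.1) hx.2
    have hsplit2 : ∫ x in (1/U)..1, (1 - Real.cos (U*x)) * ((α + (Real.exp 1*R)*x)/x)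
        = α * (∫ x in (1/U)..1, (1 - Real.cos (U*x))/x)
          + (Real.exp 1*R) * ∫ x in (1/U)..1, (1 - Real.cos (U*x)) := by
      rw [← intervalIntegral.integral_const_mul, ← intervalIntegral.integral_const_mul,
        ← intervalIntegral.integral_add (int1.const_mul α) (int2.const_mul (Real.exp 1*R))]
      apply intervalIntegral.integral_congr
      intro x hx
      have hne := (hposI x hx).ne'
      field_simp
    have hcore := core U hU
    have hsecond : ∫ x in (1/U)..1, (1 - Real.cos (U*x)) ≤ 2 := by
      have h2 : ∫ x in (1/U)..1, (1 - Real.cos (U*x)) ≤ ∫ x in (1/U)..1, (2:ℝ) := by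
        apply intervalIntegral.integral_mono_on h1U int2 intervalIntegrable_const
        intro x hx
        nlinarith [Real.neg_one_le_cos (U*x)]
      rw [intervalIntegral.integral_const, smul_eq_mul] at h2
      nlinarith [h1U0]
    rw [hsplit2] at hmono
    have h3 : α * (∫ x in (1/U)..1, (1 - Real.cos (U*x))/x) ≤ α * (Real.log U + 3) :=
      mul_le_mul_of_nonneg_left hcore hα
    have h4 : (Real.exp 1*R) * ∫ x in (1/U)..1, (1 - Real.cos (U*x))
        ≤ (Real.exp 1*R) * 2 := mul_le_mul_of_nonneg_left hsecond (by positivity)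
    linarith
  -- combine
  have hP1 : ∫ x in Iic (-1:ℝ), g x ≤ 2*R :=
    houter _ measurableSet_Iic fun x hx => le_abs.mpr (Or.inr (by
      have := Set.mem_Iic.mp hx; linarith))
  have hP4 : ∫ x in Ioi (1:ℝ), g x ≤ 2*R :=
    houter _ measurableSet_Ioi fun x hx => le_abs.mpr (Or.inl (Set.mem_Ioi.mp hx).le)
  have hmain : ∫ x : ℝ, g x ≤ α * Real.log U + 20 * R := by
    rw [hsplit, hinner, hadj]
    have hlogU : 0 ≤ Real.log U := Real.log_nonneg hU
    have hER : Real.exp 1 * R ≤ 3 * R := by nlinarith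
    nlinarith [hQ1, hQ2]
  -- conclusion
  have hIeq : ∫ x : ℝ, (Real.cos (u*x) - 1) * (Real.exp x * k x / |x|) = - ∫ x : ℝ, g x := by
    rw [← MeasureTheory.integral_neg]
    congr 1
    funext x
    rw [hceven x, hgdef]
    ring
  rw [hIeq, Real.rpow_def_of_pos hU0, ← Real.exp_add]
  apply Real.exp_le_exp.mpr
  have h := mul_le_mul_of_nonneg_left hmain hT.le
  nlinarith [h]
end

section
/- For any u ≥ 1 and any bounded measurable k̃ : (0,1] → ℝ with k̃ bounded by M and α ∈ ℝ, one has ∫_{1}^{u} (cos x − 1)/x · k̃(x/u) dx ≥ −α log u + ∫_{1/u}^{1} (α − k̃(x))/x dx + ∫_{1/u}^{1} cos(ux)/x · k̃(x) dx − 2eM, using the decomposition (cos x − 1)/x = cos(x)/x − 1/x after substitution x ↦ ux. -/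
open intervalIntegral

theorem stmt11 (u M α : ℝ) (hu : 1 ≤ u) (ktil : ℝ → ℝ)
    (hM : ∀ x ∈ Set.Ioc (0 : ℝ) 1, |ktil x| ≤ M)
    (h1 : IntervalIntegrable (fun x => (Real.cos x - 1) / x * ktil (x / u))
      MeasureTheory.volume 1 u)
    (h2 : IntervalIntegrable (fun x => (α - ktil x) / x) MeasureTheory.volume (1 / u) 1)
    (h3 : IntervalIntegrable (fun x => Real.cos (u * x) / x * ktil x)
      MeasureTheory.volume (1 / u) 1) :
    (∫ x in (1 : ℝ)..u, (Real.cos x - 1) / x * ktil (x / u)) ≥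
      -α * Real.log u + (∫ x in (1 / u : ℝ)..1, (α - ktil x) / x) +
        (∫ x in (1 / u : ℝ)..1, Real.cos (u * x) / x * ktil x) -
          2 * Real.exp 1 * M := by
  have hu0 : (0 : ℝ) < u := lt_of_lt_of_le one_pos hu
  have hune : u ≠ 0 := ne_of_gt hu0
  have hM0 : (0 : ℝ) ≤ M :=
    le_trans (abs_nonneg _) (hM 1 ⟨one_pos, le_refl 1⟩)
  have hiu0 : (0 : ℝ) < 1 / u := by positivity
  have hiu1 : (1 : ℝ) / u ≤ 1 := by
    rw [div_le_one hu0]; exact hu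
  -- substitution x ↦ u x
  set F : ℝ → ℝ := fun y => (Real.cos (u * y) - 1) / (u * y) * ktil y with hF
  have hsub : (∫ x in (1 : ℝ)..u, (Real.cos x - 1) / x * ktil (x / u))
      = u • ∫ x in (1 / u : ℝ)..(u / u), F x := by
    rw [← integral_comp_div (f := F) hune]
    apply integral_congr
    intro x hx
    simp only [hF, mul_div_cancel₀ x hune]
  have huu : u / u = (1 : ℝ) := div_self hune
  have hptwise : ∀ x : ℝ, u * F x = (Real.cos (u * x) - 1) / x * ktil x := by
    intro x
    simp only [hF]
    rw [← mul_assoc, mul_div_assoc' u _ _, mul_div_mul_left _ _ hune]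
  have hsub2 : (∫ x in (1 : ℝ)..u, (Real.cos x - 1) / x * ktil (x / u))
      = ∫ x in (1 / u : ℝ)..1, (Real.cos (u * x) - 1) / x * ktil x := by
    rw [hsub, huu, ← intervalIntegral.integral_smul]
    apply integral_congr
    intro x hx
    simpa using hptwise x
  -- integrability of α/x and ktil x / x on [1/u, 1]
  have hnot : (0 : ℝ) ∉ Set.uIcc (1 / u) 1 := by
    rw [Set.uIcc_of_le hiu1]
    intro h
    exact absurd h.1 (not_le.mpr hiu0)
  have hαx : IntervalIntegrable (fun x => α / x) MeasureTheory.volume (1 / u) 1 := by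
    apply ContinuousOn.intervalIntegrable
    apply ContinuousOn.div continuousOn_const continuousOn_id
    intro x hx
    intro h0
    exact hnot (h0 ▸ hx)
  have hkx : IntervalIntegrable (fun x => ktil x / x) MeasureTheory.volume (1 / u) 1 := by
    have : (fun x => ktil x / x) = fun x => α / x - (α - ktil x) / x := by
      funext x
      rw [div_sub_div_same]
      ring_nf
    rw [this]
    exact hαx.sub h2
  -- split the integral
  have hsplit : (∫ x in (1 / u : ℝ)..1, (Real.cos (u * x) - 1) / x * ktil x)
      = (∫ x in (1 / u : ℝ)..1, Real.cos (u * x) / x * ktil x)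
        - ∫ x in (1 / u : ℝ)..1, ktil x / x := by
    rw [← intervalIntegral.integral_sub h3 hkx]
    apply integral_congr
    intro x hx
    show (Real.cos (u * x) - 1) / x * ktil x
      = Real.cos (u * x) / x * ktil x - ktil x / x
    rw [sub_div, sub_mul, one_div, inv_mul_eq_div]
  -- compute -∫ k/x
  have hlog : (∫ x in (1 / u : ℝ)..1, α / x) = α * Real.log u := by
    have : (fun x : ℝ => α / x) = fun x : ℝ => α * (1 / x) := by
      funext x; rw [mul_one_div]
    rw [this, intervalIntegral.integral_const_mul, integral_one_div hnot,
      one_div_one_div]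
  have hkxsplit : (∫ x in (1 / u : ℝ)..1, ktil x / x)
      = α * Real.log u - ∫ x in (1 / u : ℝ)..1, (α - ktil x) / x := by
    rw [← hlog, ← intervalIntegral.integral_sub hαx h2]
    apply integral_congr
    intro x hx
    show ktil x / x = α / x - (α - ktil x) / x
    rw [div_sub_div_same]
    ring_nf
  rw [hsub2, hsplit, hkxsplit]
  have h2eM : (0 : ℝ) ≤ 2 * Real.exp 1 * M := by positivity
  linarith
end
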